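/- The arrays u_r and U_r are mutually inverse: for all n ≥ i ≥ 0, Σ_{k=i}^{n} u_r(n,k)·U_r(k,i) = δ_{n,i} and Σ_{k=i}^{n} U_r(n,k)·u_r(k,i) = δ_{n,i}. -/

import Mathlib

/-- `centralu r n k` is the r-central factorial number with even indices of the first kind. -/
def centralu (r : ℕ) : ℕ → ℕ → ℤ
  | 0, 0 => 1
  | 0, _ + 1 => 0
  | n + 1, 0 => (-1) ^ (n + 1) * ∏ i ∈ Finset.range (n + 1), ((i : ℤ) ^ 2 + r)
  | n + 1, k + 1 => centralu r n k - ((n : ℤ) ^ 2 + r) * centralu r n (k + 1)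

/-- `centralU r n k` is the r-central factorial number with even indices of the second kind. -/
def centralU (r : ℕ) : ℕ → ℕ → ℤ
  | 0, 0 => 1
  | 0, _ + 1 => 0
  | n + 1, 0 => (r : ℤ) ^ (n + 1)
  | n + 1, k + 1 => centralU r n k + (((k : ℤ) + 1) ^ 2 + r) * centralU r n (k + 1)

lemma centralu_of_lt (r : ℕ) : ∀ n k, n < k → centralu r n k = 0 := by
  intro n
  induction n with
  | zero =>
    intro k hk
    match k, hk with
    | k + 1, _ => rfl
  | succ n ih =>
    intro k hk
    match k, hk with
    | k + 1, hk =>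
      show centralu r n k - ((n : ℤ) ^ 2 + r) * centralu r n (k + 1) = 0
      rw [ih k (by omega), ih (k+1) (by omega)]
      ring

lemma centralU_of_lt (r : ℕ) : ∀ n k, n < k → centralU r n k = 0 := by
  intro n
  induction n with
  | zero =>
    intro k hk
    match k, hk with
    | k + 1, _ => rfl
  | succ n ih =>
    intro k hk
    match k, hk with
    | k + 1, hk =>
      show centralU r n k + (((k : ℤ) + 1) ^ 2 + r) * centralU r n (k + 1) = 0
      rw [ih k (by omega), ih (k+1) (by omega)]
      ring

lemma centralU_zero (r n : ℕ) : centralU r n 0 = (r : ℤ) ^ n := by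
  cases n <;> simp [centralU]

lemma centralu_zero_eq (r n : ℕ) :
    centralu r n 0 = (-1) ^ n * ∏ i ∈ Finset.range n, ((i : ℤ) ^ 2 + r) := by
  cases n <;> simp [centralu]

lemma centralu_succ_zero (r n : ℕ) :
    centralu r (n + 1) 0 = -((n : ℤ) ^ 2 + r) * centralu r n 0 := by
  rw [centralu_zero_eq, centralu_zero_eq, Finset.prod_range_succ]
  ring

lemma key1 (r : ℕ) : ∀ n i, (∑ k ∈ Finset.range (n + 1), centralu r n k * centralU r k i)
    = if n = i then 1 else 0 := by
  intro n
  induction n with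
  | zero =>
    intro i
    cases i with
    | zero => simp [centralu, centralU]
    | succ j => simp [centralu, centralU]
  | succ n ih =>
    intro i
    rw [Finset.sum_range_succ']
    cases i with
    | zero =>
      have h1 : ∀ k ∈ Finset.range (n + 1), centralu r (n + 1) (k + 1) * centralU r (k + 1) 0
          = (r : ℤ) * (centralu r n k * centralU r k 0)
            - ((n : ℤ) ^ 2 + r) * (centralu r n (k + 1) * centralU r (k + 1) 0) := by
        intro k _
        show (centralu r n k - ((n : ℤ) ^ 2 + r) * centralu r n (k + 1)) * centralU r (k + 1) 0 = _
        simp only [centralU_zero]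
        ring
      rw [Finset.sum_congr rfl h1, Finset.sum_sub_distrib, ← Finset.mul_sum, ← Finset.mul_sum]
      have h2 : (∑ k ∈ Finset.range (n + 1), centralu r n (k + 1) * centralU r (k + 1) 0)
          = (∑ k ∈ Finset.range (n + 1), centralu r n k * centralU r k 0)
            - centralu r n 0 * centralU r 0 0
            + centralu r n (n + 1) * centralU r (n + 1) 0 := by
        have ha := Finset.sum_range_succ' (fun k => centralu r n k * centralU r k 0) (n + 1)
        have hb := Finset.sum_range_succ (fun k => centralu r n k * centralU r k 0) (n + 1)
        rw [hb] at ha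
        linarith [ha]
      rw [h2, centralu_of_lt r n (n + 1) (by omega), ih 0, centralu_succ_zero]
      have hU : centralU r 0 0 = 1 := rfl
      rw [hU]
      rcases eq_or_ne n 0 with hn | hn <;> simp [hn, centralu] <;> ring
    | succ j =>
      have h1 : ∀ k ∈ Finset.range (n + 1), centralu r (n + 1) (k + 1) * centralU r (k + 1) (j + 1)
          = centralu r n k * centralU r k j
            + (((j : ℤ) + 1) ^ 2 + r) * (centralu r n k * centralU r k (j + 1))
            - ((n : ℤ) ^ 2 + r) * (centralu r n (k + 1) * centralU r (k + 1) (j + 1)) := by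
        intro k _
        have hx : centralU r (k + 1) (j + 1)
            = centralU r k j + (((j : ℤ) + 1) ^ 2 + r) * centralU r k (j + 1) := rfl
        have hu : centralu r (n + 1) (k + 1)
            = centralu r n k - ((n : ℤ) ^ 2 + r) * centralu r n (k + 1) := rfl
        rw [hu, hx]
        ring
      rw [Finset.sum_congr rfl h1, Finset.sum_sub_distrib, Finset.sum_add_distrib,
        ← Finset.mul_sum, ← Finset.mul_sum]
      have h2 : (∑ k ∈ Finset.range (n + 1), centralu r n (k + 1) * centralU r (k + 1) (j + 1))
          = (∑ k ∈ Finset.range (n + 1), centralu r n k * centralU r k (j + 1))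
            - centralu r n 0 * centralU r 0 (j + 1)
            + centralu r n (n + 1) * centralU r (n + 1) (j + 1) := by
        have ha := Finset.sum_range_succ' (fun k => centralu r n k * centralU r k (j + 1)) (n + 1)
        have hb := Finset.sum_range_succ (fun k => centralu r n k * centralU r k (j + 1)) (n + 1)
        rw [hb] at ha
        linarith [ha]
      have hz : centralU r 0 (j + 1) = 0 := rfl
      rw [h2, centralu_of_lt r n (n + 1) (by omega), hz, ih j, ih (j + 1)]
      rcases eq_or_ne n j with hj | hj
      · subst hj
        simp
      · rcases eq_or_ne n (j + 1) with hk | hk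
        · subst hk
          simp [hj]
        · simp [hj, hk]

lemma key2 (r : ℕ) : ∀ n i, (∑ k ∈ Finset.range (n + 1), centralU r n k * centralu r k i)
    = if n = i then 1 else 0 := by
  intro n
  induction n with
  | zero =>
    intro i
    cases i with
    | zero => simp [centralu, centralU]
    | succ j => simp [centralu, centralU]
  | succ n ih =>
    intro i
    rw [Finset.sum_range_succ']
    cases i with
    | zero =>
      have h1 : ∀ k ∈ Finset.range (n + 1), centralU r (n + 1) (k + 1) * centralu r (k + 1) 0
          = (((k + 1 : ℕ) : ℤ) ^ 2 + r) * (centralU r n (k + 1) * centralu r (k + 1) 0)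
            - ((k : ℤ) ^ 2 + r) * (centralU r n k * centralu r k 0) := by
        intro k _
        have hU : centralU r (n + 1) (k + 1)
            = centralU r n k + (((k : ℤ) + 1) ^ 2 + r) * centralU r n (k + 1) := rfl
        rw [hU, centralu_succ_zero]
        push_cast
        ring
      rw [Finset.sum_congr rfl h1,
        Finset.sum_range_sub (fun k => ((k : ℤ) ^ 2 + r) * (centralU r n k * centralu r k 0))]
      have hu0 : centralu r 0 0 = 1 := rfl
      rw [if_neg (Nat.succ_ne_zero n)]
      simp only [centralU_of_lt r n (n + 1) (by omega), centralU_zero, hu0]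
      push_cast
      ring
    | succ j =>
      have h1 : ∀ k ∈ Finset.range (n + 1), centralU r (n + 1) (k + 1) * centralu r (k + 1) (j + 1)
          = centralU r n k * centralu r k j
            + ((((k + 1 : ℕ) : ℤ) ^ 2 + r) * (centralU r n (k + 1) * centralu r (k + 1) (j + 1))
              - ((k : ℤ) ^ 2 + r) * (centralU r n k * centralu r k (j + 1))) := by
        intro k _
        have hU : centralU r (n + 1) (k + 1)
            = centralU r n k + (((k : ℤ) + 1) ^ 2 + r) * centralU r n (k + 1) := rfl
        have hu : centralu r (k + 1) (j + 1)
            = centralu r k j - ((k : ℤ) ^ 2 + r) * centralu r k (j + 1) := rfl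
        rw [hU, hu]
        push_cast
        ring
      rw [Finset.sum_congr rfl h1, Finset.sum_add_distrib,
        Finset.sum_range_sub (fun k => ((k : ℤ) ^ 2 + r) * (centralU r n k * centralu r k (j + 1))),
        ih j]
      have hz : centralu r 0 (j + 1) = 0 := rfl
      simp only [centralU_of_lt r n (n + 1) (by omega), hz]
      simp

theorem centralu_centralU_orthogonal (r n i : ℕ) (h : i ≤ n) :
    (∑ k ∈ Finset.Icc i n, centralu r n k * centralU r k i) =
        (if n = i then 1 else 0) ∧
      (∑ k ∈ Finset.Icc i n, centralU r n k * centralu r k i) =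
        (if n = i then 1 else 0) := by
  have hsub : Finset.Icc i n ⊆ Finset.range (n + 1) := by
    intro k hk
    simp only [Finset.mem_Icc] at hk
    simp only [Finset.mem_range]
    omega
  constructor
  · have e : (∑ k ∈ Finset.Icc i n, centralu r n k * centralU r k i)
        = ∑ k ∈ Finset.range (n + 1), centralu r n k * centralU r k i := by
      refine Finset.sum_subset hsub ?_
      intro k hk hnk
      simp only [Finset.mem_Icc, Finset.mem_range] at hk hnk
      rw [centralU_of_lt r k i (by omega)]
      ring
    rw [e, key1 r n i]
  · have e : (∑ k ∈ Finset.Icc i n, centralU r n k * centralu r k i)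
        = ∑ k ∈ Finset.range (n + 1), centralU r n k * centralu r k i := by
      refine Finset.sum_subset hsub ?_
      intro k hk hnk
      simp only [Finset.mem_Icc, Finset.mem_range] at hk hnk
      rw [centralu_of_lt r k i (by omega)]
      ring
    rw [e, key2 r n i]
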